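/- Let T be a monoidal (commutative) monad on Set. The following are equivalent: (1) T is relevant, i.e. for every type A and every x : T A, Prod.mk <$> x <*> x = (fun a => (a, a)) <$> x (ψ ∘ Δ = TΔ); (2) for all types A, B and every t : T (A × B), Prod.mk <$> (Prod.fst <$> t) <*> (Prod.snd <$> t) = t (that is, ψ ∘ χ = id, where χ = ⟨Tπ₁, Tπ₂⟩). -/

import Mathlib

universe u

/-- `T` is relevant: ψ ∘ Δ = TΔ. -/
def Relevant (T : Type u → Type u) [Monad T] : Prop :=
  ∀ (A : Type u) (x : T A),
    @Prod.mk A A <$> x <*> x = (fun a => (a, a) : A → A × A) <$> x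

/-- `T` is relevant iff ψ ∘ χ = id. -/
theorem relevant_iff_psi_chi_eq_id
    (T : Type u → Type u) [Monad T] [LawfulMonad T] [CommApplicative T] :
    Relevant T ↔
      ∀ (A B : Type u) (t : T (A × B)),
        @Prod.mk A B <$> (Prod.fst <$> t) <*> (Prod.snd <$> t) = t := by
  constructor
  · intro h A B t
    have key := h (A × B) t
    have := congrArg (fun s => (fun pq : (A × B) × (A × B) => (pq.1.1, pq.2.2)) <$> s) key
    simp only [map_seq, seq_map_assoc, Functor.map_map] at this ⊢
    simpa [Function.comp_def] using this
  · intro h A x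
    have key := h A A ((fun a => (a, a) : A → A × A) <$> x)
    simp only [Functor.map_map] at key
    simpa using key
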